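/- arXiv:0902.4369 — 2 statements merged into one kernel-verified Lean document; each statement's English description precedes it below -/
import Mathlib

section
/- The density of the random variable U = X|Y|^{1/2}, where X is standard normal independent of |Y| having density 2(y+z) marginalized appropriately, equals (2/π) ∫₀^∞ exp(−u²/(2v²) − v⁴/2) dv. Equivalently, (1/π)∫₀^∞∫₀^∞ ((y+z)/√y) exp(−u²/(2y) − (y+z)²/2) dy dz = (2/π)∫₀^∞ exp(−u²/(2v²) − v⁴/2) dv for every real u. -/
open MeasureTheory Set Filter Topology

-- derivative fact
lemma lemA_deriv (a : ℝ) (x : ℝ) :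
    HasDerivAt (fun z => -Real.exp (-(a + z) ^ 2 / 2))
      ((a + x) * Real.exp (-(a + x) ^ 2 / 2)) x := by
  have h1 : HasDerivAt (fun z : ℝ => -(a + z) ^ 2 / 2) (-(a + x)) x := by
    have := (((hasDerivAt_id x).const_add a).pow 2).neg.div_const 2
    refine this.congr_deriv ?_
    simp
    ring
  have := h1.exp.neg
  refine this.congr_deriv ?_
  ring

lemma lemA_tendsto (a : ℝ) :
    Tendsto (fun z => -Real.exp (-(a + z) ^ 2 / 2)) atTop (𝓝 0) := by
  rw [show (0:ℝ) = -0 by ring]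
  apply Tendsto.neg
  apply Real.tendsto_exp_atBot.comp
  have h1 : Tendsto (fun z : ℝ => (a + z) ^ 2) atTop atTop :=
    (tendsto_pow_atTop two_ne_zero).comp (tendsto_atTop_add_const_left atTop a tendsto_id)
  have h2 : Tendsto (fun z : ℝ => (a + z) ^ 2 / 2) atTop atTop :=
    h1.atTop_div_const two_pos
  have h3 := tendsto_neg_atTop_atBot.comp h2
  refine h3.congr fun z => ?_
  simp [neg_div]

lemma lemA_pos (a : ℝ) (ha : 0 ≤ a) :
    ∀ x ∈ Ioi (0:ℝ), 0 ≤ (a + x) * Real.exp (-(a + x) ^ 2 / 2) := by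
  intro x hx
  have : (0:ℝ) < a + x := by simp at hx; linarith
  positivity

lemma lemA_int (a : ℝ) (ha : 0 ≤ a) :
    IntegrableOn (fun z => (a + z) * Real.exp (-(a + z) ^ 2 / 2)) (Ioi (0:ℝ)) :=
  integrableOn_Ioi_deriv_of_nonneg' (fun x _ => lemA_deriv a x) (lemA_pos a ha) (lemA_tendsto a)

lemma lemA_val (a : ℝ) (ha : 0 ≤ a) :
    ∫ z in Ioi (0:ℝ), (a + z) * Real.exp (-(a + z) ^ 2 / 2) = Real.exp (-a ^ 2 / 2) := by
  rw [integral_Ioi_of_hasDerivAt_of_nonneg' (fun x _ => lemA_deriv a x) (lemA_pos a ha)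
    (lemA_tendsto a)]
  simp

-- integrability of the limiting integrand
lemma lemB (u : ℝ) :
    IntegrableOn (fun v => Real.exp (-u ^ 2 / (2 * v ^ 2)) * Real.exp (-v ^ 4 / 2))
      (Ioi (0:ℝ)) := by
  have hint : IntegrableOn (fun v : ℝ => Real.exp (1/2) * Real.exp (-(1/2 : ℝ) * v ^ 2))
      (Ioi (0:ℝ)) :=
    ((integrable_exp_neg_mul_sq (by norm_num : (0:ℝ) < 1/2)).const_mul _).integrableOn
  refine hint.mono' ?_ ?_
  · apply Measurable.aestronglyMeasurable
    fun_prop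
  · filter_upwards [ae_restrict_mem measurableSet_Ioi] with v hv
    have h1 : Real.exp (-u ^ 2 / (2 * v ^ 2)) ≤ 1 := by
      apply Real.exp_le_one_iff.mpr
      have : (0:ℝ) < v := hv
      have h2 : 0 < 2 * v ^ 2 := by positivity
      apply div_nonpos_of_nonpos_of_nonneg
      · simp [sq_nonneg u]
      · positivity
    have h2 : Real.exp (-v ^ 4 / 2) ≤ Real.exp (1/2) * Real.exp (-(1/2 : ℝ) * v ^ 2) := by
      rw [← Real.exp_add]
      apply Real.exp_le_exp.mpr
      nlinarith [sq_nonneg (v^2 - 1)]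
    rw [Real.norm_eq_abs, abs_of_nonneg (by positivity)]
    calc Real.exp (-u ^ 2 / (2 * v ^ 2)) * Real.exp (-v ^ 4 / 2)
        ≤ 1 * Real.exp (-v ^ 4 / 2) := by
          apply mul_le_mul_of_nonneg_right h1 (Real.exp_pos _).le
      _ = Real.exp (-v ^ 4 / 2) := one_mul _
      _ ≤ _ := h2

-- substitution y = v^2
lemma lemC (u z : ℝ) :
    ∫ y in Ioi (0:ℝ), ((y + z) / Real.sqrt y) * Real.exp (-u ^ 2 / (2 * y) - (y + z) ^ 2 / 2)
      = ∫ v in Ioi (0:ℝ),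
          2 * ((v ^ 2 + z) * Real.exp (-u ^ 2 / (2 * v ^ 2) - (v ^ 2 + z) ^ 2 / 2)) := by
  rw [← integral_comp_rpow_Ioi
    (fun y => ((y + z) / Real.sqrt y) * Real.exp (-u ^ 2 / (2 * y) - (y + z) ^ 2 / 2))
    (two_ne_zero)]
  refine setIntegral_congr_fun measurableSet_Ioi fun x hx => ?_
  have hx0 : (0:ℝ) < x := hx
  have hrp : x ^ (2:ℝ) = x ^ 2 := by
    rw [show (2:ℝ) = ((2:ℕ):ℝ) by norm_num, Real.rpow_natCast]
  have h1 : ((2:ℝ) - 1) = 1 := by norm_num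
  rw [smul_eq_mul, hrp, h1, Real.rpow_one, Real.sqrt_sq hx0.le]
  rw [abs_of_nonneg (by norm_num : (0:ℝ) ≤ 2)]
  field_simp

lemma key_eq (u v z : ℝ) :
    2 * ((v ^ 2 + z) * Real.exp (-u ^ 2 / (2 * v ^ 2) - (v ^ 2 + z) ^ 2 / 2))
      = (2 * Real.exp (-u ^ 2 / (2 * v ^ 2))) * ((v ^ 2 + z) * Real.exp (-(v ^ 2 + z) ^ 2 / 2)) := by
  rw [sub_eq_add_neg, Real.exp_add, ← neg_div]
  ring

lemma lemE (u v : ℝ) :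
    ∫ z in Ioi (0:ℝ), 2 * ((v ^ 2 + z) * Real.exp (-u ^ 2 / (2 * v ^ 2) - (v ^ 2 + z) ^ 2 / 2))
      = 2 * Real.exp (-u ^ 2 / (2 * v ^ 2) - v ^ 4 / 2) := by
  simp_rw [key_eq u v]
  rw [MeasureTheory.integral_const_mul, lemA_val (v ^ 2) (sq_nonneg v)]
  rw [sub_eq_add_neg, Real.exp_add, ← neg_div, show ((v:ℝ) ^ 2) ^ 2 = v ^ 4 by ring]
  ring

lemma lemB' (u : ℝ) :
    IntegrableOn (fun v => 2 * Real.exp (-u ^ 2 / (2 * v ^ 2) - v ^ 4 / 2)) (Ioi (0:ℝ)) := by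
  refine ((lemB u).const_mul 2).congr (Filter.Eventually.of_forall fun v => ?_)
  dsimp only
  rw [sub_eq_add_neg, Real.exp_add, ← neg_div]

lemma lemD (u : ℝ) :
    Integrable
      (Function.uncurry fun v z : ℝ =>
        2 * ((v ^ 2 + z) * Real.exp (-u ^ 2 / (2 * v ^ 2) - (v ^ 2 + z) ^ 2 / 2)))
      ((volume.restrict (Ioi (0:ℝ))).prod (volume.restrict (Ioi (0:ℝ)))) := by
  have hmeas : AEStronglyMeasurable
      (Function.uncurry fun v z : ℝ =>
        2 * ((v ^ 2 + z) * Real.exp (-u ^ 2 / (2 * v ^ 2) - (v ^ 2 + z) ^ 2 / 2)))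
      ((volume.restrict (Ioi (0:ℝ))).prod (volume.restrict (Ioi (0:ℝ)))) := by
    apply Measurable.aestronglyMeasurable
    have : (Function.uncurry fun v z : ℝ =>
        2 * ((v ^ 2 + z) * Real.exp (-u ^ 2 / (2 * v ^ 2) - (v ^ 2 + z) ^ 2 / 2)))
      = fun p : ℝ × ℝ =>
        2 * ((p.1 ^ 2 + p.2) * Real.exp (-u ^ 2 / (2 * p.1 ^ 2) - (p.1 ^ 2 + p.2) ^ 2 / 2)) := rfl
    rw [this]
    fun_prop
  refine (integrable_prod_iff hmeas).mpr ⟨?_, ?_⟩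
  · filter_upwards [ae_restrict_mem measurableSet_Ioi] with v _
    refine ((lemA_int (v ^ 2) (sq_nonneg v)).const_mul
      (2 * Real.exp (-u ^ 2 / (2 * v ^ 2)))).congr
      (Filter.Eventually.of_forall fun z => ?_)
    exact (key_eq u v z).symm
  · refine (lemB' u).congr ?_
    filter_upwards [ae_restrict_mem measurableSet_Ioi] with v hv
    have hv0 : (0:ℝ) < v := hv
    rw [← lemE u v]
    refine setIntegral_congr_fun measurableSet_Ioi fun z hz => ?_
    have hz0 : (0:ℝ) < z := hz
    have hpos : (0:ℝ) < v ^ 2 + z := add_pos_of_nonneg_of_pos (sq_nonneg v) hz0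
    have hnn : (0:ℝ) ≤ 2 * ((v ^ 2 + z) * Real.exp (-u ^ 2 / (2 * v ^ 2) - (v ^ 2 + z) ^ 2 / 2)) :=
      mul_nonneg (by norm_num) (mul_nonneg hpos.le (Real.exp_pos _).le)
    simp only [Function.uncurry_apply_pair, Real.norm_eq_abs]
    rw [abs_of_nonneg hnn]

/-- Dobrushin's formula: for every real `u`,
`(1/π) ∫₀^∞ ∫₀^∞ ((y+z)/√y) exp(−u²/(2y) − (y+z)²/2) dy dz
  = (2/π) ∫₀^∞ exp(−u²/(2v²) − v⁴/2) dv`. -/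
theorem stmt2 (u : ℝ) :
    (1 / Real.pi) * ∫ z in Set.Ioi (0:ℝ), ∫ y in Set.Ioi (0:ℝ),
        ((y + z) / Real.sqrt y) * Real.exp (-u^2 / (2*y) - (y+z)^2 / 2)
      = (2 / Real.pi) * ∫ v in Set.Ioi (0:ℝ),
          Real.exp (-u^2 / (2*v^2) - v^4 / 2) := by
  have h1 : ∀ z : ℝ, ∫ y in Ioi (0:ℝ),
      ((y + z) / Real.sqrt y) * Real.exp (-u ^ 2 / (2 * y) - (y + z) ^ 2 / 2)
      = ∫ v in Ioi (0:ℝ),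
        2 * ((v ^ 2 + z) * Real.exp (-u ^ 2 / (2 * v ^ 2) - (v ^ 2 + z) ^ 2 / 2)) := lemC u
  simp_rw [h1]
  have hswap := MeasureTheory.integral_integral_swap (lemD u)
  rw [← hswap]
  rw [setIntegral_congr_fun measurableSet_Ioi (fun v _ => lemE u v)]
  rw [MeasureTheory.integral_const_mul]
  ring
end

section
/- Let h, ℓ : [0,1] → ℝ be absolutely continuous with ℓ(0)=0 and h(x) = max_{0≤u≤x} ℓ(u). Then h'(x)·(h(x) − ℓ(x)) = 0 a.e. and ∫₀¹((h'(x) − ℓ'(x))² + h'(x)²) dx = ∫₀¹ ℓ'(x)² dx. -/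
open MeasureTheory Set Filter Topology Metric

lemma prim_deriv (g : ℝ → ℝ) (hg : Integrable g) :
    ∀ᵐ x, HasDerivAt (fun y => ∫ t in (0:ℝ)..y, g t) (g x) x := by
  filter_upwards [IsUnifLocDoublingMeasure.ae_tendsto_average_norm_sub volume
    hg.locallyIntegrable 1] with x hx
  set B : ℝ → ℝ := fun y => ⨍ z in closedBall ((x+y)/2) (|y-x|/2), ‖g z - g x‖ with hB
  have hδ : Tendsto (fun y : ℝ => |y - x| / 2) (𝓝[≠] x) (𝓝[>] 0) := by
    rw [tendsto_nhdsWithin_iff]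
    constructor
    · have : Tendsto (fun y : ℝ => |y - x| / 2) (𝓝 x) (𝓝 (|x - x|/2)) :=
        ((continuous_id.sub continuous_const).abs.div_const 2).tendsto x
      simpa using this.mono_left nhdsWithin_le_nhds
    · filter_upwards [self_mem_nhdsWithin] with y hy
      have : y - x ≠ 0 := sub_ne_zero.2 hy
      simp only [Set.mem_Ioi]
      positivity
  have havg : Tendsto B (𝓝[≠] x) (𝓝 0) := by
    apply hx (fun y => (x+y)/2) (fun y => |y-x|/2) hδ
    filter_upwards with y
    simp only [mem_closedBall, Real.dist_eq]
    have hxy : x - (x+y)/2 = (x-y)/2 := by ring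
    rw [hxy, one_mul, abs_div, abs_sub_comm x y]
    norm_num
  have hBx : B x = 0 := by
    simp only [hB, sub_self, abs_zero, zero_div]
    rw [closedBall_zero]
    have h0 : volume.restrict ({x} : Set ℝ) = 0 := Measure.restrict_eq_zero.2 (by simp)
    rw [setAverage_eq, Measure.restrict_eq_zero.2 (by simp)]
    simp
  have hBtendsto : Tendsto B (𝓝 x) (𝓝 0) := by
    rw [← nhdsNE_sup_pure, tendsto_sup]
    exact ⟨havg, by rw [tendsto_pure_left]; intro s hs; simpa [hBx] using mem_of_mem_nhds hs⟩
  rw [hasDerivAt_iff_tendsto]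
  apply squeeze_zero (fun y => by positivity) _ hBtendsto
  intro y
  rcases eq_or_ne y x with rfl | hyx
  · simp [hBx]
  have h2r : 0 < |y - x| := by simpa [sub_ne_zero] using hyx
  have hII : ∀ a b : ℝ, IntervalIntegrable g volume a b := fun a b => hg.intervalIntegrable
  have key : (∫ t in (0:ℝ)..y, g t) - (∫ t in (0:ℝ)..x, g t) - (y - x) • g x
      = ∫ t in x..y, (g t - g x) := by
    rw [intervalIntegral.integral_sub (hII x y) intervalIntegrable_const,
      intervalIntegral.integral_const, intervalIntegral.integral_interval_sub_left (hII 0 y) (hII 0 x)]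
  rw [key]
  have hsub : Set.uIoc x y ⊆ closedBall ((x+y)/2) (|y-x|/2) := by
    intro t ht
    rw [Set.mem_uIoc] at ht
    simp only [mem_closedBall, Real.dist_eq]
    rw [abs_le]
    rcases ht with ⟨h1, h2⟩ | ⟨h1, h2⟩
    · rw [abs_of_nonneg (by linarith)]; constructor <;> linarith
    · rw [abs_of_nonpos (by linarith)]; constructor <;> linarith
  have hnorm : ‖∫ t in x..y, (g t - g x)‖ ≤ ∫ t in Set.uIoc x y, ‖g t - g x‖ :=
    intervalIntegral.norm_integral_le_integral_norm_uIoc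
  have hmono : (∫ t in Set.uIoc x y, ‖g t - g x‖)
      ≤ ∫ z in closedBall ((x+y)/2) (|y-x|/2), ‖g z - g x‖ := by
    apply setIntegral_mono_set
      ((hg.integrableOn.sub (integrableOn_const measure_closedBall_lt_top.ne)).norm)
    · filter_upwards with t using norm_nonneg _
    · exact HasSubset.Subset.eventuallyLE hsub
  have hballvol : (volume (closedBall ((x+y)/2) (|y-x|/2))).toReal = |y - x| := by
    rw [Real.volume_closedBall, ENNReal.toReal_ofReal (by positivity)]
    ring
  have hBy : B y = |y - x|⁻¹ * ∫ z in closedBall ((x+y)/2) (|y-x|/2), ‖g z - g x‖ := by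
    show (⨍ z in closedBall ((x+y)/2) (|y-x|/2), ‖g z - g x‖) = _
    rw [setAverage_eq, measureReal_def, hballvol]
    simp [smul_eq_mul]
  rw [hBy, Real.norm_eq_abs (y - x)]
  exact mul_le_mul_of_nonneg_left (le_trans hnorm hmono) (inv_nonneg.2 (abs_nonneg _))

lemma acc_ae (S : Set ℝ) : ∀ᵐ x ∂(volume.restrict S), x ∈ closure (S \ {x}) := by
  filter_upwards [Besicovitch.ae_tendsto_measure_inter_div volume S] with x hx
  by_contra hcl
  obtain ⟨ε, εpos, hε⟩ : ∃ ε > 0, ∀ y ∈ S \ {x}, ε ≤ dist x y := by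
    rw [Metric.mem_closure_iff] at hcl
    push_neg at hcl
    obtain ⟨ε, εpos, hd⟩ := hcl
    exact ⟨ε, εpos, hd⟩
  have h0 : Tendsto (fun r => volume (S ∩ closedBall x r) / volume (closedBall x r))
      (𝓝[>] 0) (𝓝 0) := by
    apply Tendsto.congr' _ (tendsto_const_nhds : Filter.Tendsto _ _ (nhds (0:ENNReal)))
    filter_upwards [Ioo_mem_nhdsGT_of_mem ⟨le_refl (0:ℝ), εpos⟩] with r hr
    have hsub : S ∩ closedBall x r ⊆ {x} := by
      rintro y ⟨hyS, hyb⟩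
      by_contra hne
      have h1 := hε y ⟨hyS, hne⟩
      rw [mem_closedBall, dist_comm] at hyb
      have := hr.2
      linarith
    have hz : volume (S ∩ closedBall x r) = 0 :=
      le_antisymm ((measure_mono hsub).trans (by simp)) (zero_le)
    simp [hz]
  exact one_ne_zero (tendsto_nhds_unique hx h0)

/-- Let `ℓ` be absolutely continuous on `[0,1]` with `ℓ(0)=0` and let `h` be its running
maximum, also absolutely continuous with a.e. derivative `h'`. Then `h'(x)(h(x)−ℓ(x)) = 0`
a.e. and `∫₀¹ ((h'−ℓ')² + h'²) = ∫₀¹ ℓ'²`. -/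
theorem stmt9 (l l' h h' : ℝ → ℝ)
    (hl0 : l 0 = 0)
    (hl'int : IntegrableOn l' (Set.Icc 0 1))
    (hlAC : ∀ x ∈ Set.Icc (0:ℝ) 1, l x = ∫ u in Set.Ioc 0 x, l' u)
    (hmax : ∀ x ∈ Set.Icc (0:ℝ) 1, IsGreatest (l '' Set.Icc 0 x) (h x))
    (hh'int : IntegrableOn h' (Set.Icc 0 1))
    (hhAC : ∀ x ∈ Set.Icc (0:ℝ) 1, h x = ∫ u in Set.Ioc 0 x, h' u) :
    (∀ᵐ x ∂(volume.restrict (Set.Ioc (0:ℝ) 1)), h' x * (h x - l x) = 0) ∧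
    ∫ x in Set.Ioc (0:ℝ) 1, ((h' x - l' x)^2 + (h' x)^2)
      = ∫ x in Set.Ioc (0:ℝ) 1, (l' x)^2 := by
  set gl : ℝ → ℝ := (Set.Icc (0:ℝ) 1).indicator l' with hgl
  set gh : ℝ → ℝ := (Set.Icc (0:ℝ) 1).indicator h' with hgh
  have hgl_int : Integrable gl := hl'int.integrable_indicator measurableSet_Icc
  have hgh_int : Integrable gh := hh'int.integrable_indicator measurableSet_Icc
  set L : ℝ → ℝ := fun y => ∫ t in (0:ℝ)..y, gl t with hLdef
  set H : ℝ → ℝ := fun y => ∫ t in (0:ℝ)..y, gh t with hHdef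
  have hLeq : ∀ x ∈ Set.Icc (0:ℝ) 1, l x = L x := by
    intro x hx
    rw [hlAC x hx, hLdef]
    simp only
    rw [intervalIntegral.integral_of_le hx.1]
    exact setIntegral_congr_fun measurableSet_Ioc
      (fun t ht => (indicator_of_mem (show t ∈ Set.Icc (0:ℝ) 1 from ⟨ht.1.le, ht.2.trans hx.2⟩) l').symm)
  have hHeq : ∀ x ∈ Set.Icc (0:ℝ) 1, h x = H x := by
    intro x hx
    rw [hhAC x hx, hHdef]
    simp only
    rw [intervalIntegral.integral_of_le hx.1]
    exact setIntegral_congr_fun measurableSet_Ioc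
      (fun t ht => (indicator_of_mem (show t ∈ Set.Icc (0:ℝ) 1 from ⟨ht.1.le, ht.2.trans hx.2⟩) h').symm)
  have hLcont : Continuous L :=
    intervalIntegral.continuous_primitive (fun a b => hgl_int.intervalIntegrable) 0
  have hHcont : Continuous H :=
    intervalIntegral.continuous_primitive (fun a b => hgh_int.intervalIntegrable) 0
  have hle : ∀ x ∈ Set.Icc (0:ℝ) 1, l x ≤ h x := fun x hx =>
    (hmax x hx).2 ⟨x, ⟨hx.1, le_refl x⟩, rfl⟩
  have hmono : ∀ x ∈ Set.Icc (0:ℝ) 1, ∀ y ∈ Set.Icc (0:ℝ) 1, x ≤ y → h x ≤ h y := by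
    intro x hx y hy hxy
    obtain ⟨c, hc, hcl⟩ := (hmax x hx).1
    rw [← hcl]
    exact (hmax y hy).2 ⟨c, ⟨hc.1, hc.2.trans hxy⟩, rfl⟩
  set E : Set ℝ := Set.Ioc (0:ℝ) 1 ∩ {x | H x = L x} with hE
  have hEmeas : MeasurableSet E :=
    measurableSet_Ioc.inter (isClosed_eq hHcont hLcont).measurableSet
  have hacc : ∀ᵐ x, x ∈ E → x ∈ closure (E \ {x}) :=
    (ae_restrict_iff' hEmeas).1 (acc_ae E)
  have h1ne : ∀ᵐ x : ℝ, x ≠ (1:ℝ) := by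
    rw [ae_iff]
    have hs : {a : ℝ | ¬a ≠ 1} = {1} := by ext y; simp
    rw [hs]
    exact Real.volume_singleton
  have main : ∀ᵐ x ∂(volume.restrict (Set.Ioc (0:ℝ) 1)),
      h' x * (h x - l x) = 0 ∧ h' x * (h' x - l' x) = 0 := by
    rw [ae_restrict_iff' measurableSet_Ioc]
    filter_upwards [prim_deriv gl hgl_int, prim_deriv gh hgh_int, hacc, h1ne]
      with x hdL hdH haccx hx1 hxIoc
    have hxI : x ∈ Set.Ioo (0:ℝ) 1 := ⟨hxIoc.1, lt_of_le_of_ne hxIoc.2 hx1⟩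
    have hxIcc : x ∈ Set.Icc (0:ℝ) 1 := ⟨hxI.1.le, hxI.2.le⟩
    have hnbhd : Set.Ioo (0:ℝ) 1 ∈ 𝓝 x := Ioo_mem_nhds hxI.1 hxI.2
    have hHd : HasDerivAt h (h' x) x := by
      have hgx : gh x = h' x := indicator_of_mem hxIcc h'
      rw [hgx] at hdH
      exact hdH.congr_of_eventuallyEq (by
        filter_upwards [hnbhd] with y hy using hHeq y ⟨hy.1.le, hy.2.le⟩)
    have hLd : HasDerivAt l (l' x) x := by
      have hgx : gl x = l' x := indicator_of_mem hxIcc l'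
      rw [hgx] at hdL
      exact hdL.congr_of_eventuallyEq (by
        filter_upwards [hnbhd] with y hy using hLeq y ⟨hy.1.le, hy.2.le⟩)
    rcases eq_or_lt_of_le (hle x hxIcc) with heq | hlt
    · -- h x = l x : show h' x = l' x
      have hxE : x ∈ E := ⟨hxIoc, by
        show H x = L x
        rw [← hHeq x hxIcc, ← hLeq x hxIcc, heq]⟩
      have hg : HasDerivAt (fun y => h y - l y) (h' x - l' x) x := hHd.sub hLd
      rw [hasDerivAt_iff_tendsto_slope] at hg
      have hne : (𝓝[E \ {x}] x).NeBot := mem_closure_iff_nhdsWithin_neBot.1 (haccx hxE)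
      have h2 : Tendsto (slope (fun y => h y - l y) x) (𝓝[E \ {x}] x) (𝓝 (h' x - l' x)) :=
        hg.mono_left (nhdsWithin_mono x (fun y hy => hy.2))
      have h3 : Tendsto (slope (fun y => h y - l y) x) (𝓝[E \ {x}] x) (𝓝 0) := by
        apply Tendsto.congr' _ tendsto_const_nhds
        filter_upwards [self_mem_nhdsWithin] with y hy
        have hyIcc : y ∈ Set.Icc (0:ℝ) 1 := ⟨hy.1.1.1.le, hy.1.1.2⟩
        have hyeq : h y = l y := by rw [hHeq y hyIcc, hLeq y hyIcc]; exact hy.1.2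
        simp [slope_def_field, hyeq, ← heq]
      have hd0 : h' x - l' x = 0 := tendsto_nhds_unique h2 h3
      constructor
      · rw [← heq, sub_self, mul_zero]
      · rw [hd0, mul_zero]
    · -- l x < h x : show h' x = 0
      have hx0 : h' x = 0 := by
        have hLlt : L x < h x := by rw [← hLeq x hxIcc]; exact hlt
        obtain ⟨ε, εpos, hball⟩ :=
          Metric.isOpen_iff.1 (isOpen_lt hLcont continuous_const) x hLlt
        set δ := min (ε/2) ((1-x)/2) with hδ
        have hδpos : 0 < δ := lt_min (by positivity) (by have := hxI.2; linarith)
        have hδε : δ < ε := lt_of_le_of_lt (min_le_left _ _) (by linarith)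
        have hδ1 : x + δ ≤ 1 := by
          have : δ ≤ (1-x)/2 := min_le_right _ _
          linarith
        have hconst : ∀ y ∈ Set.Icc x (x+δ), h y = h x := by
          intro y hy
          have hyIcc : y ∈ Set.Icc (0:ℝ) 1 :=
            ⟨hxIcc.1.trans hy.1, hy.2.trans hδ1⟩
          refine le_antisymm ?_ (hmono x hxIcc y hyIcc hy.1)
          obtain ⟨c, hc, hcl⟩ := (hmax y hyIcc).1
          rw [← hcl]
          rcases le_or_gt c x with hcx | hcx
          · exact (hmax x hxIcc).2 ⟨c, ⟨hc.1, hcx⟩, rfl⟩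
          · have hcIcc : c ∈ Set.Icc (0:ℝ) 1 := ⟨hc.1, hc.2.trans hyIcc.2⟩
            have hcball : c ∈ Metric.ball x ε := by
              rw [mem_ball, Real.dist_eq, abs_of_pos (by linarith)]
              have : c ≤ x + δ := hc.2.trans hy.2
              linarith
            have := hball hcball
            rw [hLeq c hcIcc]
            exact le_of_lt this
        rw [hasDerivAt_iff_tendsto_slope] at hHd
        have h2 : Tendsto (slope h x) (𝓝[>] x) (𝓝 (h' x)) :=
          hHd.mono_left (nhdsWithin_mono x (fun y hy => ne_of_gt hy))
        have h3 : Tendsto (slope h x) (𝓝[>] x) (𝓝 0) := by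
          apply Tendsto.congr' _ tendsto_const_nhds
          filter_upwards [Ioc_mem_nhdsGT_of_mem ⟨le_refl x, lt_add_of_pos_right x hδpos⟩]
            with y hy
          have hyc := hconst y ⟨hy.1.le, hy.2⟩
          simp [slope_def_field, hyc]
        exact tendsto_nhds_unique h2 h3
      exact ⟨by rw [hx0, zero_mul], by rw [hx0, zero_mul]⟩
  refine ⟨?_, ?_⟩
  · filter_upwards [main] with x hx using hx.1
  · apply integral_congr_ae
    filter_upwards [main] with x hx
    have h2 := hx.2
    have : (h' x - l' x)^2 + (h' x)^2 - (l' x)^2 = 2*(h' x * (h' x - l' x)) := by ring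
    nlinarith [this]
end
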